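/- arXiv:1903.09853 — 2 statements merged into one kernel-verified Lean document; each statement's English description precedes it below -/
import Mathlib

section
/- For every real number q ≥ 1, every natural number k, and every real number a ≥ k, one has ∏_{i=0}^{k} (a - i) ≤ (a - k + k/q) · ∏_{i=0}^{k-1} (a - i - 1/q). -/
theorem prod_ineq (q : ℝ) (hq : 1 ≤ q) (k : ℕ) (a : ℝ) (ha : (k : ℝ) ≤ a) :
    ∏ i ∈ Finset.range (k + 1), (a - i) ≤
      (a - k + k / q) * ∏ i ∈ Finset.range k, (a - i - 1 / q) := by
  induction k with
  | zero => simp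
  | succ k ih =>
    have hq0 : 0 < q := lt_of_lt_of_le one_pos hq
    have ht0 : 0 < 1 / q := by positivity
    have ht1 : 1 / q ≤ 1 := by rw [div_le_one hq0]; exact hq
    have ha' : (k : ℝ) + 1 ≤ a := by push_cast at ha; linarith
    have h1 := ih (by linarith)
    have hP : 0 ≤ ∏ i ∈ Finset.range k, (a - i - 1 / q) := by
      apply Finset.prod_nonneg
      intro i hi
      have : (i : ℝ) + 1 ≤ k := by exact_mod_cast Finset.mem_range.mp hi
      linarith
    rw [Finset.prod_range_succ (fun i => a - (i:ℝ)) (k+1), Finset.prod_range_succ (fun i => a - (i:ℝ) - 1/q) k]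
    push_cast
    have hb : (0:ℝ) ≤ a - k - 1 := by linarith
    have h2 : (∏ i ∈ Finset.range (k + 1), (a - i)) * (a - (k + 1)) ≤
        ((a - k + k / q) * ∏ i ∈ Finset.range k, (a - i - 1 / q)) * (a - (k + 1)) :=
      mul_le_mul_of_nonneg_right h1 (by linarith)
    have hs : (a - k + k / q) * (a - (k + 1)) ≤
        (a - (k + 1) + (k + 1) / q) * (a - k - 1 / q) := by
      have hfrac : (k + 1 : ℝ) / q = (k + 1) * (1 / q) := by ring
      have hkfrac : (k : ℝ) / q = k * (1 / q) := by ring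
      rw [hfrac, hkfrac]
      nlinarith [mul_nonneg (by positivity : (0:ℝ) ≤ (k:ℝ) + 1) (mul_nonneg ht0.le (by linarith : (0:ℝ) ≤ 1 - 1/q))]
    calc (∏ i ∈ Finset.range (k + 1), (a - i)) * (a - (k + 1))
        ≤ ((a - k + k / q) * (a - (k + 1))) * ∏ i ∈ Finset.range k, (a - i - 1 / q) := by
          rw [mul_right_comm] at h2; exact h2
      _ ≤ ((a - (k + 1) + (k + 1) / q) * (a - k - 1 / q)) * ∏ i ∈ Finset.range k, (a - i - 1 / q) :=
          mul_le_mul_of_nonneg_right hs hP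
      _ = (a - (k + 1) + (k + 1) / q) * ((∏ i ∈ Finset.range k, (a - i - 1 / q)) * (a - k - 1 / q)) := by ring
end

section
/- For any prime p, integer m ≥ 1, and integer n with n ≥ p·(δ_p + m - 1), one has C_m^p(n) ≤ C_m^p(n-1) + C_{m-1}^p(n-1). -/
open Finset

private lemma prod_nonneg_aux (q d x : ℚ) (hd : 0 ≤ d) (hq : 0 ≤ q) (k : ℕ)
    (hx : q * (d + k - 1) ≤ x) :
    0 ≤ ∏ i ∈ range k, (x - (d + i) * q) := by
  apply Finset.prod_nonneg
  intro i hi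
  rw [mem_range] at hi
  have hik : (i : ℚ) + 1 ≤ (k : ℚ) := by exact_mod_cast hi
  nlinarith

private lemma key (q d : ℚ) (hq : 2 ≤ q) (hd : 0 ≤ d) :
    ∀ m : ℕ, ∀ n : ℚ, q * (d + m) ≤ n →
      ∏ i ∈ range (m + 1), (n - (d + i) * q) - ∏ i ∈ range (m + 1), (n - 1 - (d + i) * q)
        ≤ (m + 1) * ∏ i ∈ range m, (n - 1 - (d + i) * q) := by
  intro m
  induction m with
  | zero => intro n hn; simp
  | succ m ih =>
    intro n hn
    have hq0 : (0:ℚ) ≤ q := by linarith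
    have hn' : q * (d + m) ≤ n := by push_cast at hn ⊢; nlinarith
    have IH := ih n hn'
    set A := ∏ i ∈ range (m + 1), (n - (d + i) * q) with hA
    set B := ∏ i ∈ range (m + 1), (n - 1 - (d + i) * q) with hB
    set Q := ∏ i ∈ range m, (n - 1 - (d + i) * q) with hQdef
    have hc : 0 ≤ n - (d + (m + 1)) * q := by push_cast at hn ⊢; nlinarith
    have hQ : 0 ≤ Q := by
      apply prod_nonneg_aux q d (n - 1) hd hq0
      push_cast at hn ⊢; nlinarith
    have hBQ : B = Q * (n - 1 - (d + m) * q) := by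
      rw [hB, hQdef, prod_range_succ]
    have hA2 : ∏ i ∈ range (m + 1 + 1), (n - (d + i) * q)
        = A * (n - (d + (m + 1)) * q) := by
      rw [hA, prod_range_succ]; congr 1; simp
    have hB2 : ∏ i ∈ range (m + 1 + 1), (n - 1 - (d + i) * q)
        = B * (n - 1 - (d + (m + 1)) * q) := by
      rw [hB, prod_range_succ]; congr 1; simp
    rw [hA2, hB2]
    push_cast
    have hcle : n - (d + (m + 1)) * q ≤ n - 1 - (d + m) * q := by push_cast; nlinarith
    have h1 : (A - B) * (n - (d + (m + 1)) * q) ≤ ((m:ℚ) + 1) * Q * (n - (d + (m + 1)) * q) := by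
      apply mul_le_mul_of_nonneg_right _ hc
      push_cast at IH; linarith
    have h2 : ((m:ℚ) + 1) * Q * (n - (d + (m + 1)) * q) ≤ ((m:ℚ) + 1) * Q * (n - 1 - (d + m) * q) := by
      apply mul_le_mul_of_nonneg_left hcle
      positivity
    push_cast at h1 h2
    nlinarith [h1, h2, hBQ]

theorem C_ineq (p : ℕ) (hp : p.Prime) (m : ℕ) (hm : 1 ≤ m) (n : ℤ)
    (δ : ℚ) (hδ : δ = if p = 2 then 1 else 0)
    (hn : ((p : ℚ)) * (δ + m - 1) ≤ (n : ℚ))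
    (C : ℕ → ℤ → ℚ)
    (hC : ∀ k : ℕ, ∀ N : ℤ,
      C k N = (1 / (k.factorial : ℚ)) * ∏ i ∈ Finset.range k, ((N : ℚ) - (δ + i) * p)) :
    C m n ≤ C m (n - 1) + C (m - 1) (n - 1) := by
  obtain ⟨m', rfl⟩ : ∃ m', m = m' + 1 := ⟨m - 1, (Nat.succ_pred_eq_of_pos hm).symm⟩
  have hd : 0 ≤ δ := by rw [hδ]; split <;> norm_num
  have hq : (2:ℚ) ≤ (p:ℚ) := by exact_mod_cast hp.two_le
  have hn' : (p:ℚ) * (δ + m') ≤ (n:ℚ) := by push_cast at hn ⊢; nlinarith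
  have hk := key (p:ℚ) δ hq hd m' (n:ℚ) hn'
  rw [hC, hC, hC]
  simp only [Nat.add_sub_cancel]
  set A := ∏ i ∈ range (m' + 1), ((n:ℚ) - (δ + i) * p) with hA
  set B := ∏ i ∈ range (m' + 1), (((n - 1 : ℤ):ℚ) - (δ + i) * p) with hB
  set Q := ∏ i ∈ range m', (((n - 1 : ℤ):ℚ) - (δ + i) * p) with hQdef
  have hB' : B = ∏ i ∈ range (m' + 1), ((n:ℚ) - 1 - (δ + i) * p) := by
    rw [hB]; apply Finset.prod_congr rfl; intro i _; push_cast; ring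
  have hQ' : Q = ∏ i ∈ range m', ((n:ℚ) - 1 - (δ + i) * p) := by
    rw [hQdef]; apply Finset.prod_congr rfl; intro i _; push_cast; ring
  rw [hB', hQ']
  have hF : (0:ℚ) < ((m' + 1).factorial : ℚ) := by positivity
  have hG : (0:ℚ) < ((m').factorial : ℚ) := by positivity
  have hFG : (((m' + 1).factorial : ℚ)) = ((m':ℚ) + 1) * (m'.factorial : ℚ) := by
    rw [Nat.factorial_succ]; push_cast; ring
  have hk' : A - ∏ i ∈ range (m' + 1), ((n:ℚ) - 1 - (δ + i) * p)
      ≤ ((m':ℚ) + 1) * ∏ i ∈ range m', ((n:ℚ) - 1 - (δ + i) * p) := by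
    push_cast at hk ⊢; linarith
  set B2 := ∏ i ∈ range (m' + 1), ((n:ℚ) - 1 - (δ + i) * p)
  set Q2 := ∏ i ∈ range m', ((n:ℚ) - 1 - (δ + i) * p)
  have h1 : 1 / ((m' + 1).factorial : ℚ) * A
      ≤ 1 / ((m' + 1).factorial : ℚ) * (B2 + ((m':ℚ) + 1) * Q2) := by
    apply mul_le_mul_of_nonneg_left (by linarith) (by positivity)
  have h2 : 1 / ((m' + 1).factorial : ℚ) * (B2 + ((m':ℚ) + 1) * Q2)
      = 1 / ((m' + 1).factorial : ℚ) * B2 + 1 / (m'.factorial : ℚ) * Q2 := by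
    rw [hFG]; field_simp
  linarith
end
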